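/- Let 0 < λ < μ and √(λμ) < λ₀ < μ, and let α satisfy 0 ≤ α < λ + μ − λ₀ − λμ/λ₀. Then (λ₀/μ) · G₋(α) < 1, where G₋(α) = (λ + μ − α − √((λ + μ − α)² − 4λμ)) / (2λ). -/

import Mathlib

/-- For `√(λμ) < λ₀ < μ` and `0 ≤ α < λ + μ − λ₀ − λμ/λ₀`, one has
`(λ₀/μ)·G₋(α) < 1`, where `G₋(α) = (λ + μ − α − √((λ + μ − α)² − 4λμ)) / (2λ)`. -/
theorem mm1_case2_strict (lam mu lam0 alpha : ℝ) (hlam : 0 < lam) (hmu : lam < mu)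
    (hlam0l : Real.sqrt (lam * mu) < lam0) (hlam0u : lam0 < mu)
    (halpha0 : 0 ≤ alpha) (halpha : alpha < lam + mu - lam0 - lam * mu / lam0) :
    (lam0 / mu) *
      ((lam + mu - alpha - Real.sqrt ((lam + mu - alpha) ^ 2 - 4 * lam * mu)) / (2 * lam))
      < 1 := by
  have hmupos : 0 < mu := hlam.trans hmu
  have hlmpos : 0 < lam * mu := mul_pos hlam hmupos
  have hlam0 : 0 < lam0 := (Real.sqrt_nonneg _).trans_lt hlam0l
  have hsq : Real.sqrt (lam * mu) ^ 2 = lam * mu := Real.sq_sqrt hlmpos.le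
  have hlm : lam * mu < lam0 ^ 2 := by
    nlinarith [Real.sqrt_nonneg (lam * mu)]
  set t := lam * mu / lam0 with ht
  have htpos : 0 < t := div_pos hlmpos hlam0
  have htl : lam0 * t = lam * mu := by rw [ht]; field_simp [hlam0.ne']
  have htlt : t < lam0 := by
    rw [ht, div_lt_iff₀ hlam0]; nlinarith
  set s := lam + mu - alpha with hs
  have hsgt : lam0 + t < s := by rw [hs]; linarith
  have hkey : (s - 2 * t) ^ 2 < s ^ 2 - 4 * lam * mu := by nlinarith
  have hsqrt : s - 2 * t < Real.sqrt (s ^ 2 - 4 * lam * mu) := by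
    have h0 : 0 ≤ s - 2 * t := by nlinarith
    exact (Real.lt_sqrt h0).mpr hkey
  rw [div_mul_div_comm, div_lt_one (by positivity)]
  nlinarith [Real.sqrt_nonneg (s ^ 2 - 4 * lam * mu)]
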